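/- arXiv:2508.21620 — 3 statements merged into one kernel-verified Lean document; each statement's English description precedes it below -/
import Mathlib

section
/- Core lemma of the UCB analysis: let 𝒜 be a nonempty finite set, let μ̂, μ : 𝒜 → ℝ and ε : 𝒜 → ℝ with ε(a) ≥ 0 and |μ̂(a) − μ(a)| ≤ ε(a) for all a ∈ 𝒜. If a_t maximizes the function a ↦ μ̂(a) + ε(a) over 𝒜 and a* maximizes μ over 𝒜, then μ(a*) − μ(a_t) ≤ 2 ε(a_t). -/
/-- Core lemma of the UCB analysis: if every estimate `μ̂ a` is within `ε a` of
the true mean `μ a`, `at_` maximizes the UCB index `a ↦ μ̂ a + ε a`, and `astar`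
maximizes `μ`, then `μ astar − μ at_ ≤ 2 ε at_`. -/
theorem ucb_core
    {A : Type*} [Fintype A] [Nonempty A]
    (μhat μ : A → ℝ) (ε : A → ℝ) (hε : ∀ a, 0 ≤ ε a)
    (hclose : ∀ a, |μhat a - μ a| ≤ ε a)
    (at_ astar : A)
    (hat : ∀ a, μhat a + ε a ≤ μhat at_ + ε at_)
    (hastar : ∀ a, μ a ≤ μ astar) :
    μ astar - μ at_ ≤ 2 * ε at_ := by
  have h1 := abs_le.mp (hclose astar)
  have h2 := abs_le.mp (hclose at_)
  have h3 := hat astar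
  linarith [h1.1, h1.2, h2.1, h2.2]
end

section
/- Sum of predictive variances is controlled by the information gain: let σ_n > 0 and m > 0, and let v_1, ..., v_T be reals with 0 ≤ v_t ≤ m for all t. Then Σ_{t=1}^T v_t ≤ (2m / log(1 + σ_n^{-2} m)) · (1/2) Σ_{t=1}^T log(1 + v_t / σ_n²). -/
lemma log_one_add_ge (c m v : ℝ) (hc : 0 < c) (hm : 0 < m)
    (hv0 : 0 ≤ v) (hvm : v ≤ m) :
    v * Real.log (1 + m / c) ≤ m * Real.log (1 + v / c) := by
  have hcon := strictConcaveOn_log_Ioi.concaveOn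
  have h1 : (1 : ℝ) ∈ Set.Ioi (0 : ℝ) := by norm_num
  have hy : (1 + m / c) ∈ Set.Ioi (0 : ℝ) := by
    have : 0 < m / c := div_pos hm hc
    simp [Set.mem_Ioi]; linarith
  have ha : 0 ≤ v / m := div_nonneg hv0 hm.le
  have hb : 0 ≤ 1 - v / m := by
    have : v / m ≤ 1 := (div_le_one hm).2 hvm
    linarith
  have hab : v / m + (1 - v / m) = 1 := by ring
  have key := hcon.2 hy h1 ha hb hab
  have hmix : (v / m) • (1 + m / c) + (1 - v / m) • (1 : ℝ) = 1 + v / c := by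
    simp only [smul_eq_mul]
    field_simp
    ring
  rw [hmix] at key
  simp only [smul_eq_mul, Real.log_one, mul_zero, add_zero] at key
  have := mul_le_mul_of_nonneg_left key hm.le
  calc v * Real.log (1 + m / c) = m * (v / m * Real.log (1 + m / c)) := by
        field_simp
    _ ≤ m * Real.log (1 + v / c) := this

/-- Sum of predictive variances is controlled by the information gain: for noise
level `σn > 0`, bound `m > 0`, and variances `0 ≤ v t ≤ m`,
`∑ t, v t ≤ (2 m / log (1 + σn⁻² m)) · (1/2) ∑ t, log (1 + v t / σn²)`. -/
theorem sum_variances_le_info_gain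
    (σn m : ℝ) (hσn : 0 < σn) (hm : 0 < m)
    (T : ℕ) (v : Fin T → ℝ) (hv : ∀ t, 0 ≤ v t ∧ v t ≤ m) :
    ∑ t, v t ≤
      2 * m / Real.log (1 + σn ^ (-2 : ℤ) * m) *
        (1 / 2 * ∑ t, Real.log (1 + v t / σn ^ 2)) := by
  have hc : (0 : ℝ) < σn ^ 2 := by positivity
  have hrw : σn ^ (-2 : ℤ) * m = m / σn ^ 2 := by
    rw [zpow_neg]
    rw [inv_mul_eq_div]
    norm_cast
  rw [hrw]
  set L := Real.log (1 + m / σn ^ 2) with hL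
  have hLpos : 0 < L := Real.log_pos (by
    have : 0 < m / σn ^ 2 := div_pos hm hc
    linarith)
  have hterm : ∀ t, v t * L ≤ m * Real.log (1 + v t / σn ^ 2) := fun t =>
    log_one_add_ge (σn ^ 2) m (v t) hc hm (hv t).1 (hv t).2
  have hsum : (∑ t, v t) * L ≤ m * ∑ t, Real.log (1 + v t / σn ^ 2) := by
    rw [Finset.sum_mul, Finset.mul_sum]
    exact Finset.sum_le_sum fun t _ => hterm t
  have : 2 * m / L * (1 / 2 * ∑ t, Real.log (1 + v t / σn ^ 2))
      = m * (∑ t, Real.log (1 + v t / σn ^ 2)) / L := by ring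
  rw [this, le_div_iff₀ hLpos]
  exact hsum
end

section
/- Per-step bound in the Thompson-sampling analysis: let t ≥ 1 be an integer, let 𝒳 be a nonempty finite set of cardinality |𝒳|, let 0 < σ ≤ 1, and set β = √(2 log((t² + 1)|𝒳| / √(2π))), assuming (t² + 1)|𝒳| ≥ √(2π). If Z is a real Gaussian random variable with mean −βσ and variance σ², then E[Z · 1{Z ≥ 0}] ≤ 1 / ((t² + 1) |𝒳|). -/
open MeasureTheory ProbabilityTheory Real

lemma gauss_trunc_aux (m σ : ℝ) (hσ : 0 < σ) (hm : m ≤ 0) :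
    ∫ x in Set.Ici (0:ℝ), x ∂(gaussianReal m ⟨σ^2, sq_nonneg σ⟩) ≤
      σ / Real.sqrt (2*π) * Real.exp (-(m^2) / (2*σ^2)) := by
  set v : NNReal := ⟨σ^2, sq_nonneg σ⟩ with hv
  have hv0 : v ≠ 0 := by
    intro h
    have : σ ^ 2 = 0 := congrArg NNReal.toReal h
    exact (pow_pos hσ 2).ne' this
  have hvr : (v : ℝ) = σ^2 := rfl
  set p : ℝ → ℝ := gaussianPDFReal m v with hp
  have hpnn : ∀ x, 0 ≤ p x := gaussianPDFReal_nonneg m v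
  set b : ℝ := (2 * σ^2)⁻¹ with hbdef
  have hb : 0 < b := by positivity
  set c : ℝ := (Real.sqrt (2 * π * σ^2))⁻¹ with hcdef
  have hc : 0 < c := by
    have : 0 < 2 * π * σ^2 := by positivity
    positivity
  have hpx : ∀ x, p x = c * Real.exp (-b * (x - m)^2) := by
    intro x
    simp only [hp, gaussianPDFReal, hvr, hcdef, hbdef]
    congr 1
    rw [div_eq_mul_inv]
    ring
  -- step 1: rewrite as density integral
  have h1 : ∫ x in Set.Ici (0:ℝ), x ∂(gaussianReal m v) =
      ∫ x in Set.Ici (0:ℝ), p x * x := by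
    rw [gaussianReal_of_var_ne_zero _ hv0]
    have : (gaussianPDF m v) = fun x => ((p x).toNNReal : ENNReal) := by
      funext x; rfl
    rw [this, setIntegral_withDensity_eq_setIntegral_smul
      ((measurable_gaussianPDFReal m v).real_toNNReal) _ measurableSet_Ici]
    refine setIntegral_congr_fun measurableSet_Ici fun x _ => ?_
    simp [NNReal.smul_def, Real.coe_toNNReal _ (hpnn x)]
    exact Or.inl (max_eq_left (hpnn x))
  -- integrability of (x - m) * p x
  have hgInt : Integrable (fun x => (x - m) * p x) := by
    have h0 : Integrable (fun x : ℝ => x * Real.exp (-b * x^2)) :=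
      integrable_mul_exp_neg_mul_sq hb
    have h1 : Integrable (fun x : ℝ => (x - m) * Real.exp (-b * (x - m)^2)) :=
      h0.comp_sub_right m
    have := h1.const_mul c
    refine this.congr (ae_of_all _ fun x => ?_)
    simp only [hpx]; ring
  have hpInt : Integrable p := integrable_gaussianPDFReal m v
  -- FTC: ∫ x in Ioi 0, (x - m) * p x = σ^2 * p 0
  have hderiv : ∀ x ∈ Set.Ici (0:ℝ),
      HasDerivAt (fun y => (-σ^2 * c) * Real.exp (-b * (y - m)^2)) ((x - m) * p x) x := by
    intro x _
    have h1 : HasDerivAt (fun y : ℝ => -b * (y - m)^2) (-b * (2 * (x - m))) x := by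
      have h := ((hasDerivAt_id x).sub_const m).pow 2
      have h2 := h.const_mul (-b)
      simpa [mul_comm, mul_assoc, mul_left_comm] using h2
    have h3 := (h1.exp).const_mul (-σ^2 * c)
    refine h3.congr_deriv ?_
    rw [hpx x, hbdef]
    field_simp
  have htend : Filter.Tendsto (fun y => (-σ^2 * c) * Real.exp (-b * (y - m)^2))
      Filter.atTop (nhds 0) := by
    have h1 : Filter.Tendsto (fun y : ℝ => (y - m)^2) Filter.atTop Filter.atTop :=
      (Filter.tendsto_pow_atTop two_ne_zero).comp (Filter.tendsto_atTop_add_const_right _ (-m)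
        Filter.tendsto_id)
    have h2 : Filter.Tendsto (fun y : ℝ => -b * (y - m)^2) Filter.atTop Filter.atBot :=
      h1.const_mul_atTop_of_neg (neg_neg_iff_pos.mpr hb)
    have h3 := Real.tendsto_exp_atBot.comp h2
    have := h3.const_mul (-σ^2 * c)
    simpa using this
  have hftc : ∫ x in Set.Ioi (0:ℝ), (x - m) * p x = σ^2 * p 0 := by
    rw [integral_Ioi_of_hasDerivAt_of_tendsto' (fun x hx => hderiv x hx)
      hgInt.integrableOn htend]
    rw [hpx 0]; ring
  -- comparison
  have hxpInt : Integrable (fun x => p x * x) := by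
    have : (fun x => p x * x) = fun x => (x - m) * p x + m * p x := by
      funext x; ring
    rw [this]
    exact hgInt.add (hpInt.const_mul m)
  have hcomp : ∫ x in Set.Ioi (0:ℝ), p x * x ≤ ∫ x in Set.Ioi (0:ℝ), (x - m) * p x := by
    refine setIntegral_mono_on hxpInt.integrableOn hgInt.integrableOn measurableSet_Ioi
      fun x hx => ?_
    have hx0 : (0:ℝ) ≤ x := le_of_lt hx
    rw [mul_comm (p x) x]
    exact mul_le_mul_of_nonneg_right (by linarith) (hpnn x)
  have hIci : ∫ x in Set.Ici (0:ℝ), p x * x = ∫ x in Set.Ioi (0:ℝ), p x * x :=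
    integral_Ici_eq_integral_Ioi
  -- final value computation
  have hsqrt : Real.sqrt (2 * π * σ^2) = Real.sqrt (2 * π) * σ := by
    rw [Real.sqrt_mul (by positivity), Real.sqrt_sq hσ.le]
  have hval : σ^2 * p 0 = σ / Real.sqrt (2*π) * Real.exp (-(m^2) / (2*σ^2)) := by
    rw [hp, gaussianPDFReal, hvr, hsqrt]
    have hs : 0 < Real.sqrt (2 * π) := Real.sqrt_pos.mpr (by positivity)
    have : (-(0 - m)^2 / (2 * σ^2)) = (-(m^2) / (2*σ^2)) := by ring
    rw [this]
    field_simp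
  calc ∫ x in Set.Ici (0:ℝ), x ∂(gaussianReal m v)
      = ∫ x in Set.Ioi (0:ℝ), p x * x := by rw [h1, hIci]
    _ ≤ ∫ x in Set.Ioi (0:ℝ), (x - m) * p x := hcomp
    _ = σ^2 * p 0 := hftc
    _ = σ / Real.sqrt (2*π) * Real.exp (-(m^2) / (2*σ^2)) := hval

/-- Per-step bound in the Thompson-sampling analysis: for `t ≥ 1`, a finite
nonempty search space `𝒳`, `0 < σ ≤ 1` and
`β = √(2 log ((t² + 1)|𝒳| / √(2π)))` (with `(t² + 1)|𝒳| ≥ √(2π)`), a Gaussian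
`Z` with mean `−βσ` and variance `σ²` satisfies
`E[Z · 1{Z ≥ 0}] ≤ 1 / ((t² + 1)|𝒳|)`. -/
theorem thompson_per_step_bound
    {X : Type*} [Fintype X] [Nonempty X]
    (t : ℕ) (ht : 1 ≤ t) (σ : ℝ) (hσ0 : 0 < σ) (hσ1 : σ ≤ 1)
    (hcard : Real.sqrt (2 * π) ≤ ((t : ℝ) ^ 2 + 1) * (Fintype.card X : ℝ))
    (β : ℝ)
    (hβ : β = Real.sqrt (2 * Real.log (((t : ℝ) ^ 2 + 1) * (Fintype.card X : ℝ)
      / Real.sqrt (2 * π)))) :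
    ∫ x in Set.Ici (0 : ℝ), x ∂(gaussianReal (-β * σ) ⟨σ ^ 2, sq_nonneg σ⟩) ≤
      1 / (((t : ℝ) ^ 2 + 1) * (Fintype.card X : ℝ)) := by
  set N : ℝ := ((t : ℝ) ^ 2 + 1) * (Fintype.card X : ℝ) with hNdef
  have hcpos : (0:ℝ) < (Fintype.card X : ℝ) := by
    exact_mod_cast Fintype.card_pos
  have hN0 : 0 < N := by positivity
  have hs : 0 < Real.sqrt (2 * π) := Real.sqrt_pos.mpr (by positivity)
  have hβ0 : 0 ≤ β := hβ ▸ Real.sqrt_nonneg _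
  have hm : -β * σ ≤ 0 := by
    have := mul_nonneg hβ0 hσ0.le
    linarith
  have hr1 : (1:ℝ) ≤ N / Real.sqrt (2 * π) := (one_le_div hs).mpr hcard
  have hlog : 0 ≤ Real.log (N / Real.sqrt (2 * π)) := Real.log_nonneg hr1
  have hβsq : β ^ 2 = 2 * Real.log (N / Real.sqrt (2 * π)) := by
    rw [hβ, sq_sqrt (by linarith)]
  have hexp : Real.exp (-((-β * σ) ^ 2) / (2 * σ ^ 2)) = Real.sqrt (2 * π) / N := by
    have harg : -((-β * σ) ^ 2) / (2 * σ ^ 2) = -(Real.log (N / Real.sqrt (2 * π))) := by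
      have : (-β * σ) ^ 2 = β ^ 2 * σ ^ 2 := by ring
      rw [this, hβsq]
      field_simp
    rw [harg, Real.exp_neg, Real.exp_log (by positivity), inv_div]
  calc ∫ x in Set.Ici (0 : ℝ), x ∂(gaussianReal (-β * σ) ⟨σ ^ 2, sq_nonneg σ⟩)
      ≤ σ / Real.sqrt (2*π) * Real.exp (-((-β * σ)^2) / (2*σ^2)) :=
        gauss_trunc_aux (-β * σ) σ hσ0 hm
    _ = σ / N := by rw [hexp]; field_simp
    _ ≤ 1 / N := by gcongr
end
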